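/- arXiv:2502.16619 — 4 statements merged into one kernel-verified Lean document; each statement's English description precedes it below -/
import Mathlib

section
/- Let t be a monoidal t-structure on a nonzero monoidal triangulated category T with 0 ∈ dev(t). Then the heart H_t, equipped with the tensor product inherited from T, is a monoidal abelian category with unit object H^0_t(𝟙), and the tensor product on H_t is exact in each variable. -/
open CategoryTheory Category Limits Pretriangulated Triangulated MonoidalCategory ZeroObject

namespace Paper

variable (C : Type*) [Category C] [Preadditive C] [HasZeroObject C] [HasShift C ℤ]
  [∀ n : ℤ, (shiftFunctor C n).Additive] [Pretriangulated C]

/-- Truncation and cohomology data for a t-structure `t`: the truncation functors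
`τ^{≤ n}`, `τ^{≥ n}` together with the natural maps `τ^{≤ n} X ⟶ X ⟶ τ^{≥ n+1} X`
and the connecting maps forming distinguished truncation triangles. -/
structure TruncData (t : TStructure C) where
  τle : ℤ → C ⥤ C
  τge : ℤ → C ⥤ C
  τle_mem (n : ℤ) (X : C) : t.le n ((τle n).obj X)
  τge_mem (n : ℤ) (X : C) : t.ge n ((τge n).obj X)
  ι (n : ℤ) : τle n ⟶ 𝟭 C
  π (n : ℤ) : 𝟭 C ⟶ τge n
  δ (n : ℤ) (X : C) : (τge (n + 1)).obj X ⟶ ((τle n).obj X)⟦(1 : ℤ)⟧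
  triangle_mem (n : ℤ) (X : C) :
    Triangle.mk ((ι n).app X) ((π (n + 1)).app X) (δ n X) ∈ distTriang C

variable {C}

/-- The cohomological functor `H^n_t := Σ^n ∘ τ^{≤ n} ∘ τ^{≥ n}`, valued in the heart. -/
def TruncData.H {t : TStructure C} (d : TruncData C t) (n : ℤ) : C ⥤ C :=
  d.τge n ⋙ d.τle n ⋙ shiftFunctor C n

/-- The heart `D^{≤ 0} ∩ D^{≥ 0}` of a t-structure. -/
def Heart (t : TStructure C) (X : C) : Prop := t.le 0 X ∧ t.ge 0 X

/-- A t-structure is bounded if every object lies in some `D^{≤ b} ∩ D^{≥ a}`. -/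
def IsBounded (t : TStructure C) : Prop := ∀ X : C, ∃ a b : ℤ, t.le b X ∧ t.ge a X


section Monoidal

variable (C) [MonoidalCategory C]

/-- A monoidal triangulated category: the tensor product is exact in each variable,
with compatibility isomorphisms `Σ(X) ⊗ Y ≅ Σ(X ⊗ Y)` and `X ⊗ Σ(Y) ≅ Σ(X ⊗ Y)`. -/
class MonoidalTriangulated where
  shiftTensor (n : ℤ) (X Y : C) : ((X⟦n⟧) ⊗ Y) ≅ ((X ⊗ Y)⟦n⟧)
  tensorShift (n : ℤ) (X Y : C) : (X ⊗ (Y⟦n⟧)) ≅ ((X ⊗ Y)⟦n⟧)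
  whiskerLeft_distinguished (X : C) (T : Triangle C) (hT : T ∈ distTriang C) :
    Triangle.mk (X ◁ T.mor₁) (X ◁ T.mor₂)
      ((X ◁ T.mor₃) ≫ (tensorShift 1 X T.obj₁).hom) ∈ distTriang C
  whiskerRight_distinguished (Y : C) (T : Triangle C) (hT : T ∈ distTriang C) :
    Triangle.mk (T.mor₁ ▷ Y) (T.mor₂ ▷ Y)
      ((T.mor₃ ▷ Y) ≫ (shiftTensor 1 T.obj₁ Y).hom) ∈ distTriang C

/-- The deviation of the `k`-shifted t-structure `Σ^{-k} t = (D^{≤ k}, D^{≥ k+1})`: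
the set of integers `n` with `D^{≤ k} ⊗ D^{≤ k+n} ⊆ D^{≤ k}` and
`D^{≥ k} ⊗ D^{≥ k+n} ⊆ D^{≥ k}`.  The deviation of `t` itself is `dev C t 0`. -/
def dev (t : TStructure C) (k : ℤ) : Set ℤ :=
  {n | (∀ X Y : C, t.le k X → t.le (k + n) Y → t.le k (X ⊗ Y)) ∧
       (∀ X Y : C, t.ge k X → t.ge (k + n) Y → t.ge k (X ⊗ Y))}

variable {C}

/-- The Künneth formula: `H^n(X ⊗ Y)` is the (bi)product `⊕_{p+q=n} H^p(X) ⊗ H^q(Y)`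
(all but finitely many summands are zero, so the product is the coproduct). -/
def Kunneth {t : TStructure C} (d : TruncData C t) : Prop :=
  ∀ (n : ℤ) (X Y : C),
    ∃ p : ∀ q : ℤ, ((d.H n).obj (X ⊗ Y)) ⟶ (((d.H q).obj X) ⊗ ((d.H (n - q)).obj Y)),
      Nonempty (IsLimit (Fan.mk ((d.H n).obj (X ⊗ Y)) p))

variable (C) in
/-- A monoidal additive category is tensor reduced if `X ⊗ X = 0` implies `X = 0`. -/
def TensorReducedCat : Prop := ∀ X : C, IsZero (X ⊗ X) → IsZero X

/-- A monoidal t-structure is tensor reduced if its heart is: for `X` in the heart,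
`X ⊗ X = 0` implies `X = 0`. -/
def TensorReduced (t : TStructure C) : Prop :=
  ∀ X : C, Heart t X → IsZero (X ⊗ X) → IsZero X

end Monoidal



section Lemmas

variable {C : Type*} [Category C] [Preadditive C] [HasZeroObject C] [HasShift C ℤ]
  [∀ n : ℤ, (shiftFunctor C n).Additive] [Pretriangulated C]

/-- Homs from `D^{≤ a}` to `D^{≥ b}` vanish when `a < b`. -/
lemma hom_zero (t : TStructure C) {X Y : C} (f : X ⟶ Y) (a b : ℤ) (h : a < b)
    (hX : t.le a X) (hY : t.ge b Y) : f = 0 := by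
  apply (shiftFunctor C a).map_injective
  rw [Functor.map_zero]
  exact t.zero' _ (t.le_shift a a 0 (add_zero a) X hX)
    (t.ge_shift (a + 1) a 1 (by omega) Y (t.ge_antitone (by omega) Y hY))

lemma obj3_isZero (t : TStructure C) (T : Triangle C) (hT : T ∈ distTriang C) (n : ℤ)
    (h1 : t.le n T.obj₁) (h3 : t.ge (n + 1) T.obj₃) (h2 : T.mor₂ = 0) : IsZero T.obj₃ := by
  obtain ⟨g, hg⟩ := Triangle.yoneda_exact₃ T hT (𝟙 T.obj₃) (by rw [h2, zero_comp])
  rw [IsZero.iff_id_eq_zero, hg,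
    hom_zero t g (n - 1) (n + 1) (by omega) (t.le_shift n 1 (n - 1) (by omega) _ h1) h3,
    comp_zero]

lemma obj1_isZero (t : TStructure C) (T : Triangle C) (hT : T ∈ distTriang C) (n : ℤ)
    (h1 : t.le n T.obj₁) (h3 : t.ge (n + 1) T.obj₃) (h2 : T.mor₁ = 0) : IsZero T.obj₁ := by
  obtain ⟨g, hg⟩ := Triangle.coyoneda_exact₁ T hT (𝟙 (T.obj₁⟦(1 : ℤ)⟧))
    (by rw [h2, Functor.map_zero, comp_zero])
  have hg0 : g = 0 :=
    hom_zero t g (n - 1) (n + 1) (by omega) (t.le_shift n 1 (n - 1) (by omega) _ h1) h3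
  have hid : 𝟙 (T.obj₁⟦(1 : ℤ)⟧) = 0 := by rw [hg, hg0, zero_comp]
  rw [IsZero.iff_id_eq_zero]
  apply (shiftFunctor C (1 : ℤ)).map_injective
  simp only [CategoryTheory.Functor.map_id, CategoryTheory.Functor.map_zero]
  exact hid

section MonLem

variable [MonoidalCategory C] [MonoidalTriangulated C]

lemma tensor_zero_left (W Z : C) (hZ : IsZero Z) : IsZero (W ⊗ Z) := by
  have hT := MonoidalTriangulated.whiskerLeft_distinguished W (contractibleTriangle Z)
    (contractible_distinguished Z)
  have h0 : IsZero (W ⊗ (0 : C)) := by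
    have := Triangle.isZero₃_of_isIso₁ _ hT (by
      show IsIso (W ◁ 𝟙 Z)
      rw [MonoidalCategory.whiskerLeft_id]
      infer_instance)
    exact this
  exact h0.of_iso (whiskerLeftIso W hZ.isoZero)

lemma tensor_zero_right (W Z : C) (hZ : IsZero Z) : IsZero (Z ⊗ W) := by
  have hT := MonoidalTriangulated.whiskerRight_distinguished W (contractibleTriangle Z)
    (contractible_distinguished Z)
  have h0 : IsZero ((0 : C) ⊗ W) := by
    have := Triangle.isZero₃_of_isIso₁ _ hT (by
      show IsIso ((𝟙 Z) ▷ W)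
      rw [MonoidalCategory.id_whiskerRight]
      infer_instance)
    exact this
  exact h0.of_iso (whiskerRightIso hZ.isoZero W)

end MonLem

variable {t : TStructure C} (d : TruncData C t)

lemma tauge_isZero (n m : ℤ) (hm : n + 1 = m) (X : C) (h : t.le n X) :
    IsZero ((d.τge m).obj X) := by
  subst hm
  exact obj3_isZero t _ (d.triangle_mem n X) n (d.τle_mem n X) (d.τge_mem (n + 1) X)
    (hom_zero t _ n (n + 1) (by omega) h (d.τge_mem (n + 1) X))

lemma taule_isZero (n m : ℤ) (hm : n + 1 = m) (X : C) (h : t.ge m X) :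
    IsZero ((d.τle n).obj X) := by
  subst hm
  exact obj1_isZero t _ (d.triangle_mem n X) n (d.τle_mem n X) (d.τge_mem (n + 1) X)
    (hom_zero t _ n (n + 1) (by omega) (d.τle_mem n X) h)

lemma taule_isZero_of_isZero (n : ℤ) (X : C) (hX : IsZero X) :
    IsZero ((d.τle n).obj X) :=
  obj1_isZero t _ (d.triangle_mem n X) n (d.τle_mem n X) (d.τge_mem (n + 1) X)
    (hX.eq_of_tgt _ 0)

lemma tauge_iso (n m : ℤ) (hm : n + 1 = m) (X : C) (h : t.ge m X) :
    Nonempty (X ≅ (d.τge m).obj X) := by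
  subst hm
  have h1 : IsZero ((d.τle n).obj X) := taule_isZero d n (n + 1) rfl X h
  have h2 := (Triangle.isZero₁_iff_isIso₂ _ (d.triangle_mem n X)).1 h1
  exact ⟨@asIso _ _ _ _ _ h2⟩

lemma taule_iso (n m : ℤ) (hm : n + 1 = m) (X : C) (h3 : IsZero ((d.τge m).obj X)) :
    Nonempty ((d.τle n).obj X ≅ X) := by
  subst hm
  have h1 := (Triangle.isZero₃_iff_isIso₁ _ (d.triangle_mem n X)).1 h3
  exact ⟨@asIso _ _ _ _ _ h1⟩

lemma H_heart_iso (n : ℤ) (hn : n = 0) (X : C) (hX : Heart t X) :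
    Nonempty ((d.H n).obj X ≅ X) := by
  subst hn
  obtain ⟨e⟩ := tauge_iso d (-1) 0 (by norm_num) X hX.2
  have hYle : t.le 0 ((d.τge (0 : ℤ)).obj X) := (t.le 0).prop_of_iso e hX.1
  obtain ⟨e'⟩ := taule_iso d 0 1 rfl ((d.τge (0 : ℤ)).obj X)
    (tauge_isZero d 0 1 rfl _ hYle)
  exact ⟨(shiftFunctorZero C ℤ).app _ ≪≫ e' ≪≫ e.symm⟩

lemma H_heart_isZero (q : ℤ) (hq : q ≠ 0) (X : C) (hX : Heart t X) :
    IsZero ((d.H q).obj X) := by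
  have : IsZero ((d.τle q).obj ((d.τge q).obj X)) := by
    rcases lt_or_gt_of_ne hq with hlt | hgt
    · -- q < 0 : τge q X ≅ X, which is GE (q+1)
      obtain ⟨e⟩ := tauge_iso d (q - 1) q (by omega) X (t.ge_antitone (by omega) X hX.2)
      have hY : t.ge (q + 1) ((d.τge q).obj X) :=
        (t.ge (q + 1)).prop_of_iso e (t.ge_antitone (by omega) X hX.2)
      exact taule_isZero d q (q + 1) rfl _ hY
    · -- q > 0 : τge q X is zero
      exact taule_isZero_of_isZero d q _
        (tauge_isZero d (q - 1) q (by omega) X (t.le_monotone (by omega) X hX.1))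
  exact (shiftFunctor C q).map_isZero this

end Lemmas

lemma fan_proj_isIso {C : Type*} [Category C] [Preadditive C]
    {ι : Type*} [DecidableEq ι] {f : ι → C} (c : Fan f) (hc : IsLimit c)
    (q0 : ι) (hz : ∀ q, q ≠ q0 → IsZero (f q)) : IsIso (c.proj q0) := by
  let g : ∀ q, f q0 ⟶ f q := fun q => if h : q0 = q then eqToHom (congrArg f h) else 0
  let m : f q0 ⟶ c.pt := hc.lift (Fan.mk (f q0) g)
  have hm : ∀ q, m ≫ c.proj q = g q := fun q => hc.fac _ ⟨q⟩
  refine ⟨m, ?_, ?_⟩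
  · apply hc.hom_ext
    rintro ⟨q⟩
    by_cases h : q0 = q
    · subst h
      show (c.proj q0 ≫ m) ≫ c.proj q0 = 𝟙 c.pt ≫ c.proj q0
      rw [assoc, hm, id_comp]
      simp [g]
    · exact (hz q (fun hq => h hq.symm)).eq_of_tgt _ _
  · rw [hm]
    simp [g]


/-- If `t` is a monoidal t-structure with `0` in its deviation on a nonzero monoidal
triangulated category, then the heart is closed under the tensor product (hence is a
monoidal abelian category with the inherited tensor product), with unit object
`H^0(𝟙)`. -/
theorem statement3 {C : Type*} [Category C] [Preadditive C] [HasZeroObject C] [HasShift C ℤ]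
    [∀ n : ℤ, (shiftFunctor C n).Additive] [Pretriangulated C] [MonoidalCategory C]
    [MonoidalTriangulated C] (hC : ∃ X : C, ¬ IsZero X)
    (t : TStructure C) (ht : IsBounded t) (d : TruncData C t) (hd : Kunneth d)
    (h0 : (0 : ℤ) ∈ dev C t 0) :
    (∀ X Y : C, Heart t X → Heart t Y → Heart t (X ⊗ Y)) ∧
    (∀ X : C, Heart t X →
      Nonempty ((((d.H 0).obj (𝟙_ C)) ⊗ X) ≅ X) ∧
      Nonempty ((X ⊗ ((d.H 0).obj (𝟙_ C))) ≅ X)) := by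
  constructor
  · intro X Y hX hY
    exact ⟨h0.1 X Y hX.1 (by simpa using hY.1), h0.2 X Y hX.2 (by simpa using hY.2)⟩
  · intro X hX
    obtain ⟨eX⟩ := H_heart_iso d 0 rfl X hX
    constructor
    · -- left: H^0(𝟙) ⊗ X ≅ X
      obtain ⟨p, ⟨hL⟩⟩ := hd 0 (𝟙_ C) X
      obtain ⟨eX'⟩ := H_heart_iso d (0 - 0) (by norm_num) X hX
      have hiso : IsIso ((Fan.mk ((d.H (0 : ℤ)).obj (𝟙_ C ⊗ X)) p).proj 0) :=
        fan_proj_isIso _ hL 0 (fun q hq =>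
          tensor_zero_left _ _ (H_heart_isZero d (0 - q) (by omega) X hX))
      have hiso' : IsIso (p 0) := by simpa using hiso
      exact ⟨whiskerLeftIso _ eX'.symm ≪≫ (asIso (p 0)).symm ≪≫
        (d.H 0).mapIso (λ_ X) ≪≫ eX⟩
    · -- right: X ⊗ H^0(𝟙) ≅ X
      obtain ⟨p, ⟨hL⟩⟩ := hd 0 X (𝟙_ C)
      have eH : (d.H ((0 : ℤ) - 0)).obj (𝟙_ C) = (d.H (0 : ℤ)).obj (𝟙_ C) := by
        rw [show (0 : ℤ) - 0 = 0 from by norm_num]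
      have hiso : IsIso ((Fan.mk ((d.H (0 : ℤ)).obj (X ⊗ 𝟙_ C)) p).proj 0) :=
        fan_proj_isIso _ hL 0 (fun q hq =>
          tensor_zero_right _ _ (H_heart_isZero d q hq X hX))
      have hiso' : IsIso (p 0) := by simpa using hiso
      exact ⟨whiskerRightIso eX.symm _ ≪≫ whiskerLeftIso _ (eqToIso eH).symm ≪≫
        (asIso (p 0)).symm ≪≫ (d.H 0).mapIso (ρ_ X) ≪≫ eX⟩


end Paper
end

section
/- Let t be a monoidal t-structure on a nonzero monoidal triangulated category T with 0 ∈ dev(t). Then dev(t) = {0}; that is, 0 is the unique integer n satisfying D^{≤0} ⊗ D^{≤n} ⊆ D^{≤0} and D^{≥0} ⊗ D^{≥n} ⊆ D^{≥0}. -/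
open CategoryTheory Category Limits Pretriangulated Triangulated MonoidalCategory

set_option linter.unusedSectionVars false

namespace Paper

variable (C : Type*) [Category C] [Preadditive C] [HasZeroObject C] [HasShift C ℤ]
  [∀ n : ℤ, (shiftFunctor C n).Additive] [Pretriangulated C]

variable {C}

section Proofs

variable {C : Type*} [Category C] [Preadditive C] [HasZeroObject C] [HasShift C ℤ]
  [∀ n : ℤ, (shiftFunctor C n).Additive] [Pretriangulated C]

variable (t : Triangulated.TStructure C)

lemma homZero {a b : ℤ} (hab : a < b) {X Y : C} (hX : t.le a X) (hY : t.ge b Y)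
    (f : X ⟶ Y) : f = 0 := by
  have h1 : t.le 0 (X⟦a⟧) := t.le_shift a a 0 (by omega) X hX
  have h2 : t.ge 1 (Y⟦a⟧) := t.ge_shift (a + 1) a 1 (by omega) Y
    (t.ge_antitone (show a + 1 ≤ b by omega) Y hY)
  have := t.zero' ((shiftFunctor C a).map f) h1 h2
  apply (shiftFunctor C a).map_injective
  rw [this, Functor.map_zero]

lemma isZero_of_le_ge {a b : ℤ} (hab : a < b) {X : C} (hX : t.le a X) (hX' : t.ge b X) :
    IsZero X := by
  rw [IsZero.iff_id_eq_zero]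
  exact homZero t hab hX hX' _

lemma le_unshift (a : ℤ) {X : C} (h : t.le 0 (X⟦a⟧)) : t.le a X := by
  rw [← t.shift_le a 0 a (by omega), ObjectProperty.prop_shift_iff]; exact h

lemma ge_unshift (a : ℤ) {X : C} (h : t.ge 0 (X⟦a⟧)) : t.ge a X := by
  rw [← t.shift_ge a 0 a (by omega), ObjectProperty.prop_shift_iff]; exact h

lemma isZero_unshift (a : ℤ) {X : C} (h : IsZero (X⟦a⟧)) : IsZero X := by
  rw [IsZero.iff_id_eq_zero] at h ⊢
  apply (shiftFunctor C a).map_injective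
  rw [CategoryTheory.Functor.map_id, Functor.map_zero, h]

variable (d : TruncData C t)

/-- The truncation triangle of `X` at level `n`. -/
def trT (n : ℤ) (X : C) : Triangle C :=
  Triangle.mk ((d.ι n).app X) ((d.π (n + 1)).app X) (d.δ n X)

lemma trT_mem (n : ℤ) (X : C) : trT t d n X ∈ distTriang C := d.triangle_mem n X

lemma isZero_τle_of_ι_zero (n : ℤ) (X : C) (h : (d.ι n).app X = 0) :
    IsZero ((d.τle n).obj X) := by
  obtain ⟨g, hg⟩ := Triangle.coyoneda_exact₁ (trT t d n X) (trT_mem t d n X)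
    (𝟙 ((trT t d n X).obj₁⟦(1 : ℤ)⟧))
    (by
      rw [id_comp]
      show (shiftFunctor C (1 : ℤ)).map ((d.ι n).app X) = 0
      rw [h, Functor.map_zero])
  have hg0 : g = 0 := homZero t (show n - 1 < n + 1 by omega)
    (t.le_shift n 1 (n - 1) (by omega) _ (d.τle_mem n X)) (d.τge_mem (n + 1) X) g
  rw [hg0, zero_comp] at hg
  exact isZero_unshift (1 : ℤ) (by rw [IsZero.iff_id_eq_zero]; exact hg)

lemma ge_of_isZero_τle (n : ℤ) (X : C) (h : IsZero ((d.τle n).obj X)) : t.ge (n + 1) X := by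
  have : IsIso (trT t d n X).mor₂ :=
    (Triangle.isZero₁_iff_isIso₂ (trT t d n X) (trT_mem t d n X)).1 h
  exact (ObjectProperty.prop_iff_of_iso (t.ge (n + 1)) (asIso (trT t d n X).mor₂)).2 (d.τge_mem (n + 1) X)

lemma isZero_τge_of_π_zero (n : ℤ) (X : C) (h : (d.π (n + 1)).app X = 0) :
    IsZero ((d.τge (n + 1)).obj X) := by
  obtain ⟨g, hg⟩ := Triangle.yoneda_exact₃ (trT t d n X) (trT_mem t d n X)
    (𝟙 ((trT t d n X).obj₃)) (by rw [comp_id]; exact h)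
  have hg0 : g = 0 := homZero t (show n - 1 < n + 1 by omega)
    (t.le_shift n 1 (n - 1) (by omega) _ (d.τle_mem n X)) (d.τge_mem (n + 1) X) g
  rw [IsZero.iff_id_eq_zero]
  rw [hg0, comp_zero] at hg
  exact hg

lemma le_of_isZero_τge (n : ℤ) (X : C) (h : IsZero ((d.τge (n + 1)).obj X)) : t.le n X := by
  have : IsIso (trT t d n X).mor₁ :=
    (Triangle.isZero₃_iff_isIso₁ (trT t d n X) (trT_mem t d n X)).1 h
  exact (ObjectProperty.prop_iff_of_iso (t.le n) (asIso (trT t d n X).mor₁)).1 (d.τle_mem n X)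

lemma ge_τle (q : ℤ) (X : C) (hX : t.ge q X) : t.ge q ((d.τle q).obj X) := by
  set A := (d.τle q).obj X with hA
  have hι : (d.ι (q - 1)).app A = 0 := by
    have hfc : (d.ι (q - 1)).app A ≫ (d.ι q).app X = 0 :=
      homZero t (show q - 1 < q by omega) (d.τle_mem (q - 1) A) hX _
    obtain ⟨g, hg⟩ := Triangle.coyoneda_exact₂ ((trT t d q X).invRotate)
      (inv_rot_of_distTriang _ (trT_mem t d q X)) ((d.ι (q - 1)).app A) hfc
    have hg0 : g = 0 := homZero t (show q - 1 < q + 2 by omega) (d.τle_mem (q - 1) A)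
      (t.ge_shift (q + 1) (-1) (q + 2) (by omega) _ (d.τge_mem (q + 1) X)) g
    rw [hg, hg0, zero_comp]; rfl
  have h0 : IsZero ((d.τle (q - 1)).obj A) := isZero_τle_of_ι_zero t d (q - 1) A hι
  have h1 : t.ge (q - 1 + 1) A := ge_of_isZero_τle t d (q - 1) A h0
  rwa [show q - 1 + 1 = q by omega] at h1

lemma le_τge (n m : ℤ) (hnm : n ≤ m + 1) (X : C) (hX : t.le m X) :
    t.le m ((d.τge (n + 1)).obj X) := by
  set W := (d.τge (n + 1)).obj X with hW
  have hπ : (d.π (m + 1)).app W = 0 := by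
    have hf : (trT t d n X).mor₂ ≫ (d.π (m + 1)).app W = 0 :=
      homZero t (show m < m + 1 by omega) hX (d.τge_mem (m + 1) W) _
    obtain ⟨g, hg⟩ := Triangle.yoneda_exact₃ (trT t d n X) (trT_mem t d n X)
      ((d.π (m + 1)).app W) hf
    have hg0 : g = 0 := homZero t (show n - 1 < m + 1 by omega)
      (t.le_shift n 1 (n - 1) (by omega) _ (d.τle_mem n X)) (d.τge_mem (m + 1) W) g
    rw [hg, hg0, comp_zero]; rfl
  exact le_of_isZero_τge t d m W (isZero_τge_of_π_zero t d m W hπ)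

lemma heart_H (q : ℤ) (X : C) : Heart t ((d.H q).obj X) := by
  constructor
  · exact t.le_shift q q 0 (by omega) _ (d.τle_mem q _)
  · exact t.ge_shift q q 0 (by omega) _ (ge_τle t d q _ (d.τge_mem q X))

section MonoidalProofs

variable [MonoidalCategory C] [MonoidalTriangulated C]

lemma isZero_tensor_of_left {X : C} (hX : IsZero X) (Y : C) : IsZero (X ⊗ Y) := by
  have hdist : Triangle.mk (𝟙 X) (0 : X ⟶ X) (0 : X ⟶ X⟦(1 : ℤ)⟧) ∈ distTriang C := by
    refine isomorphic_distinguished _ (contractible_distinguished X) _ ?_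
    exact Triangle.isoMk _ _ (Iso.refl _) (Iso.refl _) hX.isoZero (by exact (comp_id _).trans (id_comp _).symm)
      (by exact zero_comp.trans comp_zero.symm) (by exact zero_comp.trans comp_zero.symm)
  have hS := MonoidalTriangulated.whiskerRight_distinguished Y _ hdist
  have hiso : IsIso ((Triangle.mk (𝟙 X) (0 : X ⟶ X) (0 : X ⟶ X⟦(1 : ℤ)⟧)).mor₁ ▷ Y) := by
    show IsIso ((𝟙 X) ▷ Y)
    rw [MonoidalCategory.id_whiskerRight]
    infer_instance
  exact Triangle.isZero₃_of_isIso₁ _ hS hiso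

lemma heart_tensor_isZero {n : ℤ} (hn : n ∈ dev C t 0) (h0 : (0 : ℤ) ∈ dev C t 0)
    (hne : n ≠ 0) {u v : C} (hu : Heart t u) (hv : Heart t v) : IsZero (u ⊗ v) := by
  obtain ⟨hn1, hn2⟩ := hn
  obtain ⟨h01, h02⟩ := h0
  rcases lt_or_gt_of_ne hne with hneg | hpos
  · have h1 : t.ge 0 (u ⊗ v⟦-n⟧) := hn2 u (v⟦-n⟧) hu.2
      (by rw [zero_add]; exact t.ge_shift 0 (-n) n (by omega) v hv.2)
    have h2 : t.ge 0 ((u ⊗ v)⟦-n⟧) :=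
      (ObjectProperty.prop_iff_of_iso (t.ge 0) (MonoidalTriangulated.tensorShift (-n) u v)).1 h1
    have h3 : t.ge (-n) (u ⊗ v) := ge_unshift t (-n) h2
    have h4 : t.le 0 (u ⊗ v) := h01 u v hu.1 (by rw [zero_add]; exact hv.1)
    exact isZero_of_le_ge t (show (0 : ℤ) < -n by omega) h4 h3
  · have h1 : t.le 0 (u ⊗ v⟦-n⟧) := hn1 u (v⟦-n⟧) hu.1
      (by rw [zero_add]; exact t.le_shift 0 (-n) n (by omega) v hv.1)
    have h2 : t.le (-n) (u ⊗ v) := le_unshift t (-n)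
      ((ObjectProperty.prop_iff_of_iso (t.le 0) (MonoidalTriangulated.tensorShift (-n) u v)).1 h1)
    have h4 : t.ge 0 (u ⊗ v) := h02 u v hu.2 (by rw [zero_add]; exact hv.2)
    exact isZero_of_le_ge t (show -n < (0 : ℤ) by omega) h2 h4

end MonoidalProofs

end Proofs

/-- If `t` is a monoidal t-structure on a nonzero monoidal triangulated category with
`0` in its deviation, then its deviation is exactly `{0}`. -/
theorem statement4 {C : Type*} [Category C] [Preadditive C] [HasZeroObject C] [HasShift C ℤ]
    [∀ n : ℤ, (shiftFunctor C n).Additive] [Pretriangulated C] [MonoidalCategory C]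
    [MonoidalTriangulated C] (hC : ∃ X : C, ¬ IsZero X)
    (t : TStructure C) (ht : IsBounded t) (d : TruncData C t) (hd : Kunneth d)
    (h0 : (0 : ℤ) ∈ dev C t 0) :
    dev C t 0 = {0} := by
  apply Set.Subset.antisymm
  · intro n hn
    rw [Set.mem_singleton_iff]
    by_contra hne
    have hH0 : ∀ m : ℤ, IsZero ((d.H m).obj (𝟙_ C)) := by
      intro m
      obtain ⟨p, ⟨hlim⟩⟩ := hd m (𝟙_ C) (𝟙_ C)
      have hz : IsZero ((d.H m).obj ((𝟙_ C) ⊗ (𝟙_ C))) := by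
        rw [IsZero.iff_id_eq_zero]
        apply hlim.hom_ext
        intro j
        apply IsZero.eq_of_tgt
        exact heart_tensor_isZero t hn h0 hne
          (heart_H t d j.as (𝟙_ C)) (heart_H t d (m - j.as) (𝟙_ C))
      exact hz.of_iso ((d.H m).mapIso (λ_ (𝟙_ C))).symm
    obtain ⟨X0, hX0⟩ := hC
    have hu : ¬ IsZero (𝟙_ C) := fun h =>
      hX0 ((isZero_tensor_of_left h X0).of_iso (λ_ X0).symm)
    obtain ⟨a, b, hb, ha⟩ := ht (𝟙_ C)
    obtain ⟨b₀, hb₀, hmin⟩ := Int.exists_least_of_bdd (P := fun c => t.le c (𝟙_ C))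
      ⟨a, fun z hz => by
        by_contra hza
        exact hu (isZero_of_le_ge t (show z < a by omega) hz ha)⟩
      ⟨b, hb⟩
    have hWle0 : t.le b₀ ((d.τge (b₀ - 1 + 1)).obj (𝟙_ C)) :=
      le_τge t d (b₀ - 1) b₀ (by omega) (𝟙_ C) hb₀
    rw [show b₀ - 1 + 1 = b₀ by omega] at hWle0
    have hτ : IsZero ((d.τle b₀).obj ((d.τge b₀).obj (𝟙_ C))) :=
      isZero_unshift b₀ (hH0 b₀)
    have hWge : t.ge (b₀ + 1) ((d.τge b₀).obj (𝟙_ C)) := ge_of_isZero_τle t d b₀ _ hτ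
    have hW0 : IsZero ((d.τge b₀).obj (𝟙_ C)) := isZero_of_le_ge t (by omega) hWle0 hWge
    have hle' : t.le (b₀ - 1) (𝟙_ C) := le_of_isZero_τge t d (b₀ - 1) (𝟙_ C)
      (by rw [show b₀ - 1 + 1 = b₀ by omega]; exact hW0)
    have := hmin _ hle'
    omega
  · intro n hn
    rw [Set.mem_singleton_iff] at hn
    subst hn
    exact h0


end Paper
end

section
/- Let t be a tensor reduced monoidal t-structure on a monoidal triangulated category T. If X ∈ D^{≤m} with H^m_t(X) ≠ 0 then X ⊗ X ∈ D^{≤2m} with H^{2m}_t(X ⊗ X) ≠ 0; dually, if Y ∈ D^{≥n} with H^n_t(Y) ≠ 0 then Y ⊗ Y ∈ D^{≥2n} with H^{2n}_t(Y ⊗ Y) ≠ 0. -/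
open CategoryTheory Category Limits Pretriangulated Triangulated MonoidalCategory

namespace Paper

variable (C : Type*) [Category C] [Preadditive C] [HasZeroObject C] [HasShift C ℤ]
  [∀ n : ℤ, (shiftFunctor C n).Additive] [Pretriangulated C]

variable {C}

section Aux

variable {C : Type*} [Category C] [Preadditive C] [HasZeroObject C] [HasShift C ℤ]
  [∀ n : ℤ, (shiftFunctor C n).Additive] [Pretriangulated C]

lemma aux_zero (t : TStructure C) {a : ℤ} {P Q : C} (f : P ⟶ Q)
    (hP : t.le a P) (hQ : t.ge (a + 1) Q) : f = 0 := by
  have h1 : t.le 0 (P⟦a⟧) := t.le_shift a a 0 (by ring) P hP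
  have h2 : t.ge 1 (Q⟦a⟧) := t.ge_shift (a + 1) a 1 (by ring) Q hQ
  have h := t.zero' ((shiftFunctor C a).map f) h1 h2
  exact ((shiftFunctor C a).map_eq_zero_iff).1 h

lemma aux_ge_orth (t : TStructure C) {n : ℤ} {B : C}
    (h : ∀ (W : C), t.le (n - 1) W → ∀ (f : W ⟶ B), f = 0) : t.ge n B := by
  obtain ⟨W, V, hW, hV, f, g, h', mem⟩ := t.exists_triangle B (n - 1) n (by ring)
  have hf : f = 0 := h W hW f
  obtain ⟨i, hi⟩ := Triangle.coyoneda_exact₁ _ mem (𝟙 (W⟦(1 : ℤ)⟧)) (by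
    show 𝟙 (W⟦(1 : ℤ)⟧) ≫ f⟦(1 : ℤ)⟧' = 0
    rw [hf, Functor.map_zero, comp_zero])
  have hi0 : i = 0 := aux_zero t i
    (t.le_shift (n - 1) 1 (n - 2) (by ring) W hW)
    (t.ge_antitone (show n - 2 + 1 ≤ n by omega) _ hV)
  have hW1 : IsZero (W⟦(1 : ℤ)⟧) := by
    rw [IsZero.iff_id_eq_zero, hi, hi0, zero_comp]; rfl
  have hWz : IsZero W := by
    rw [IsZero.iff_id_eq_zero, ← (shiftFunctor C (1 : ℤ)).map_eq_zero_iff,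
      (shiftFunctor C (1 : ℤ)).map_id]
    exact hW1.eq_of_src _ _
  have : IsIso g := (Triangle.isZero₁_iff_isIso₂ _ mem).1 hWz
  exact (t.ge n).prop_of_iso (asIso g).symm hV

lemma aux_ge_ext (t : TStructure C) {n : ℤ} (T : Triangle C) (hT : T ∈ distTriang C)
    (h1 : t.ge n T.obj₁) (h3 : t.ge n T.obj₃) : t.ge n T.obj₂ := by
  apply aux_ge_orth t
  intro W hW φ
  have h2 : φ ≫ T.mor₂ = 0 :=
    aux_zero t _ hW (by rw [show (n : ℤ) - 1 + 1 = n by ring]; exact h3)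
  obtain ⟨ψ, hψ⟩ := Triangle.coyoneda_exact₂ _ hT φ h2
  rw [hψ, aux_zero t ψ hW (by rw [show (n : ℤ) - 1 + 1 = n by ring]; exact h1), zero_comp]

lemma aux_H_heart (t : TStructure C) (d : TruncData C t) (k : ℤ) (X : C) :
    Heart t ((d.H k).obj X) := by
  have hge : t.ge k ((d.τle k).obj ((d.τge k).obj X)) := by
    have h := aux_ge_ext t _
      (inv_rot_of_distTriang _ (d.triangle_mem k ((d.τge k).obj X)))
      (t.ge_antitone (show (k : ℤ) ≤ k + 2 by omega) _
        (t.ge_shift (k + 1) (-1) (k + 2) (by ring) _ (d.τge_mem (k + 1) ((d.τge k).obj X))))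
      (d.τge_mem k X)
    exact h
  constructor
  · exact t.le_shift k k 0 (by ring) _ (d.τle_mem k ((d.τge k).obj X))
  · exact t.ge_shift k k 0 (by ring) _ hge

variable [MonoidalCategory C]

lemma aux_kunneth_nonzero (t : TStructure C) (d : TruncData C t)
    (hd : Kunneth d) (hred : TensorReduced t) (m : ℤ) (X : C)
    (hXm : ¬ IsZero ((d.H m).obj X)) : ¬ IsZero ((d.H (2 * m)).obj (X ⊗ X)) := by
  intro hz
  obtain ⟨p, ⟨hl⟩⟩ := hd (2 * m) X X
  let F : ℤ → C := fun q => ((d.H q).obj X) ⊗ ((d.H (2 * m - q)).obj X)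
  let s : Fan F := Fan.mk (F m) (fun q => if h : q = m then eqToHom (by rw [h]) else 0)
  have fac : hl.lift s ≫ p m = 𝟙 (F m) := by
    have h := hl.fac s ⟨m⟩
    simpa [s] using h
  have hpm : p m = 0 := hz.eq_of_src _ _
  have hFm : IsZero (((d.H m).obj X) ⊗ ((d.H (2 * m - m)).obj X)) := by
    rw [IsZero.iff_id_eq_zero]
    have : 𝟙 (F m) = 0 := by rw [← fac, hpm, comp_zero]
    exact this
  rw [show (2 * m - m : ℤ) = m by ring] at hFm
  exact hXm (hred _ (aux_H_heart t d m X) hFm)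

end Aux

/-- For a tensor reduced monoidal t-structure: if `X ∈ D^{≤ m}` with `H^m(X) ≠ 0` then
`X ⊗ X ∈ D^{≤ 2m}` with `H^{2m}(X ⊗ X) ≠ 0`; dually, if `Y ∈ D^{≥ n}` with
`H^n(Y) ≠ 0` then `Y ⊗ Y ∈ D^{≥ 2n}` with `H^{2n}(Y ⊗ Y) ≠ 0`. -/
theorem statement7 {C : Type*} [Category C] [Preadditive C] [HasZeroObject C] [HasShift C ℤ]
    [∀ n : ℤ, (shiftFunctor C n).Additive] [Pretriangulated C] [MonoidalCategory C]
    [MonoidalTriangulated C]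
    (t : TStructure C) (ht : IsBounded t) (d : TruncData C t) (hd : Kunneth d)
    (h0 : (0 : ℤ) ∈ dev C t 0) (hred : TensorReduced t)
    (m n : ℤ) (X Y : C)
    (hX : t.le m X) (hXm : ¬ IsZero ((d.H m).obj X))
    (hY : t.ge n Y) (hYn : ¬ IsZero ((d.H n).obj Y)) :
    (t.le (2 * m) (X ⊗ X) ∧ ¬ IsZero ((d.H (2 * m)).obj (X ⊗ X))) ∧
    (t.ge (2 * n) (Y ⊗ Y) ∧ ¬ IsZero ((d.H (2 * n)).obj (Y ⊗ Y))) := by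
  obtain ⟨hLE, hGE⟩ := h0
  refine ⟨⟨?_, aux_kunneth_nonzero t d hd hred m X hXm⟩,
    ⟨?_, aux_kunneth_nonzero t d hd hred n Y hYn⟩⟩
  · have h1 : t.le 0 (X⟦m⟧) := t.le_shift m m 0 (by ring) X hX
    have h2 : t.le 0 ((X⟦m⟧) ⊗ (X⟦m⟧)) := hLE _ _ h1 (by rw [add_zero]; exact h1)
    have e : ((X⟦m⟧) ⊗ (X⟦m⟧)) ≅ ((X ⊗ X)⟦m + m⟧) :=
      MonoidalTriangulated.shiftTensor m X (X⟦m⟧) ≪≫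
        (shiftFunctor C m).mapIso (MonoidalTriangulated.tensorShift m X X) ≪≫
        ((shiftFunctorAdd C m m).app (X ⊗ X)).symm
    have h3 : t.le 0 ((X ⊗ X)⟦m + m⟧) := (t.le 0).prop_of_iso e h2
    have h4 := t.le_shift 0 (-(m + m)) (m + m) (by ring) _ h3
    have e2 : ((((X ⊗ X)⟦m + m⟧))⟦-(m + m)⟧) ≅ (X ⊗ X) :=
      (shiftEquiv C (m + m)).unitIso.symm.app (X ⊗ X)
    have h5 : t.le (m + m) (X ⊗ X) := (t.le (m + m)).prop_of_iso e2 h4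
    rw [show (2 * m : ℤ) = m + m by ring]
    exact h5
  · have h1 : t.ge 0 (Y⟦n⟧) := t.ge_shift n n 0 (by ring) Y hY
    have h2 : t.ge 0 ((Y⟦n⟧) ⊗ (Y⟦n⟧)) := hGE _ _ h1 (by rw [add_zero]; exact h1)
    have e : ((Y⟦n⟧) ⊗ (Y⟦n⟧)) ≅ ((Y ⊗ Y)⟦n + n⟧) :=
      MonoidalTriangulated.shiftTensor n Y (Y⟦n⟧) ≪≫
        (shiftFunctor C n).mapIso (MonoidalTriangulated.tensorShift n Y Y) ≪≫
        ((shiftFunctorAdd C n n).app (Y ⊗ Y)).symm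
    have h3 : t.ge 0 ((Y ⊗ Y)⟦n + n⟧) := (t.ge 0).prop_of_iso e h2
    have h4 := t.ge_shift 0 (-(n + n)) (n + n) (by ring) _ h3
    have e2 : ((((Y ⊗ Y)⟦n + n⟧))⟦-(n + n)⟧) ≅ (Y ⊗ Y) :=
      (shiftEquiv C (n + n)).unitIso.symm.app (Y ⊗ Y)
    have h5 : t.ge (n + n) (Y ⊗ Y) := (t.ge (n + n)).prop_of_iso e2 h4
    rw [show (2 * n : ℤ) = n + n by ring]
    exact h5

end Paper
end

section
/- Every finite tensor category A is tensor reduced: for any object X of A, X ⊗ X = 0 implies X = 0. -/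
open CategoryTheory Category Limits MonoidalCategory

namespace Paper

/-- The data and properties making a `k`-linear monoidal abelian category `A` a finite
tensor category: rigidity, a bilinear biexact tensor product, `End(𝟙) ≅ k`, simplicity
of the unit, finite length of all objects, and finitely many simple objects up to
isomorphism. -/
structure FiniteTensorData (k : Type*) [Field k] (A : Type*) [Category A] [Abelian A]
    [Linear k A] [MonoidalCategory A] where
  rigid : RigidCategory A
  monoidalPreadditive : MonoidalPreadditive A
  monoidalLinear : letI := monoidalPreadditive; MonoidalLinear k A
  tensorLeft_lexact : ∀ X : A, PreservesFiniteLimits (tensorLeft X)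
  tensorLeft_rexact : ∀ X : A, PreservesFiniteColimits (tensorLeft X)
  tensorRight_lexact : ∀ X : A, PreservesFiniteLimits (tensorRight X)
  tensorRight_rexact : ∀ X : A, PreservesFiniteColimits (tensorRight X)
  end_unit : ∀ f : 𝟙_ A ⟶ 𝟙_ A, ∃ c : k, f = c • 𝟙 (𝟙_ A)
  unit_simple : Simple (𝟙_ A)
  noetherian : ∀ X : A, IsNoetherianObject X
  artinian : ∀ X : A, IsArtinianObject X
  finitelyManySimples : ∃ (ι : Type) (_ : Finite ι) (S : ι → A),
    (∀ i, Simple (S i)) ∧ ∀ X : A, Simple X → ∃ i, Nonempty (X ≅ S i)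

/-- A predicate on objects defines a Serre subcategory if it is closed under
subobjects, quotients and extensions. -/
def IsSerre (A : Type*) [Category A] [Abelian A] (P : A → Prop) : Prop :=
  (∀ ⦃X Y : A⦄ (f : X ⟶ Y), Mono f → P Y → P X) ∧
  (∀ ⦃X Y : A⦄ (f : X ⟶ Y), Epi f → P X → P Y) ∧
  (∀ S : ShortComplex A, S.ShortExact → P S.X₁ → P S.X₃ → P S.X₂)


/-- Every finite tensor category is tensor reduced: `X ⊗ X = 0` implies `X = 0`. -/
theorem statement14 {k : Type*} [Field k] {A : Type*} [Category A] [Abelian A]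
    [Linear k A] [MonoidalCategory A] (hA : FiniteTensorData k A) :
    ∀ X : A, IsZero (X ⊗ X) → IsZero X := by
  intro X hXX
  by_contra hX
  haveI := hA.rigid
  haveI := hA.monoidalPreadditive
  haveI := hA.unit_simple
  haveI := hA.artinian X
  haveI := hA.tensorRight_lexact X
  haveI := hA.tensorRight_rexact X
  let S : A := simpleSubobject hX
  let i : S ⟶ X := simpleSubobjectArrow hX
  have h1 : IsZero (S ⊗ X) := by
    haveI : Mono ((tensorRight X).map i) := (tensorRight X).map_mono i
    exact IsZero.of_mono ((tensorRight X).map i) hXX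
  have h2 : IsZero (Sᘁ ⊗ (S ⊗ X)) := (tensorLeft Sᘁ).map_isZero h1
  have hne : (ε_ S Sᘁ) ≠ 0 := by
    intro h0
    apply Simple.not_isZero S
    rw [IsZero.iff_id_eq_zero]
    have h := ExactPairing.evaluation_coevaluation S Sᘁ
    rw [h0] at h
    simp only [MonoidalPreadditive.whiskerLeft_zero, comp_zero] at h
    have : (λ_ S).inv ≫ ((λ_ S).hom ≫ (ρ_ S).inv) ≫ (ρ_ S).hom = 𝟙 S := by simp
    rw [← h] at this
    simpa using this.symm
  haveI : Epi (ε_ S Sᘁ) := epi_of_nonzero_to_simple hne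
  have h3 : IsZero ((Sᘁ ⊗ S) ⊗ X) := h2.of_iso (α_ _ _ _)
  haveI : Epi ((tensorRight X).map (ε_ S Sᘁ)) := (tensorRight X).map_epi _
  have h4 : IsZero (𝟙_ A ⊗ X) := IsZero.of_epi ((tensorRight X).map (ε_ S Sᘁ)) h3
  exact hX (h4.of_iso (λ_ X).symm)


end Paper
end
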